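/- arXiv:1302.3360 — 4 statements merged into one kernel-verified Lean document; each statement's English description precedes it below -/
import Mathlib

section
/- Let F be a field, f : F^n → F^m a polynomial mapping with m ≥ n+1 ≥ 2, and let A^d_hom(f) denote the quotient of the space of homogeneous degree-d polynomials on F^m by the subspace of those vanishing on the image f(F^n). If for some d ≥ 1 one has dim A^d_hom(f) ≥ dim Pol^{rd}_hom(F^s) + 1, where Pol^{rd}_hom(F^s) is the space of homogeneous polynomials of degree rd in s variables, then f is (s,r)-weakly elusive: the image of f is not contained in the image of any homogeneous polynomial mapping Γ : F^s → F^m of degree r. -/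
open MvPolynomial

/-- `g : F^s → F^κ` is a homogeneous polynomial mapping of degree `r`. -/
def IsHomPolyMap (F : Type*) [CommSemiring F] (s : ℕ) {κ : Type*} (r : ℕ)
    (g : (Fin s → F) → κ → F) : Prop :=
  ∃ p : κ → MvPolynomial (Fin s) F,
    (∀ i, (p i).IsHomogeneous r) ∧ ∀ x i, g x i = eval x (p i)

/-- `g : F^s → F^κ` is a polynomial mapping of degree at most `r`. -/
def IsPolyMapDeg (F : Type*) [CommSemiring F] (s : ℕ) {κ : Type*} (r : ℕ)
    (g : (Fin s → F) → κ → F) : Prop :=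
  ∃ p : κ → MvPolynomial (Fin s) F,
    (∀ i, (p i).totalDegree ≤ r) ∧ ∀ x i, g x i = eval x (p i)

/-- `f` is `(s,r)`-weakly elusive. -/
def WeaklyElusive {F : Type*} [CommSemiring F] {n : ℕ} {κ : Type*}
    (f : (Fin n → F) → κ → F) (s r : ℕ) : Prop :=
  ∀ g : (Fin s → F) → κ → F, IsHomPolyMap F s r g → ¬ Set.range f ⊆ Set.range g

/-- `f` is `(s,r)`-elusive. -/
def Elusive {F : Type*} [CommSemiring F] {n : ℕ} {κ : Type*}
    (f : (Fin n → F) → κ → F) (s r : ℕ) : Prop :=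
  ∀ g : (Fin s → F) → κ → F, IsPolyMapDeg F s r g → ¬ Set.range f ⊆ Set.range g

/-- The subspace of `Pol^d_hom(F^m)` of homogeneous degree-`d` polynomials vanishing on `S`. -/
def vanishingOn {F : Type*} [CommRing F] {m : ℕ} (S : Set (Fin m → F)) (d : ℕ) :
    Submodule F (homogeneousSubmodule (Fin m) F d) where
  carrier := {p | ∀ x ∈ S, eval x (p : MvPolynomial (Fin m) F) = 0}
  add_mem' := by
    intro a b ha hb x hx
    simp [ha x hx, hb x hx]
  zero_mem' := by intro x hx; simp
  smul_mem' := by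
    intro c a ha x hx
    simp [ha x hx]

/-- `A^d_hom(f)`, the quotient of `Pol^d_hom(F^m)` by the homogeneous degree-`d` polynomials
vanishing on the image of `f`. -/
abbrev Ahom {F : Type*} [CommRing F] {n m : ℕ} (f : (Fin n → F) → Fin m → F) (d : ℕ) :=
  (homogeneousSubmodule (Fin m) F d) ⧸ vanishingOn (Set.range f) d


lemma homSubFinDim (F : Type*) [Field F] (k N : ℕ) :
    FiniteDimensional F (homogeneousSubmodule (Fin k) F N) :=
  FiniteDimensional.of_injective
    (Submodule.inclusion (fun p hp => (mem_restrictTotalDegree _ _ _).mpr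
      (MvPolynomial.IsHomogeneous.totalDegree_le hp)))
    (Submodule.inclusion_injective _)

lemma eval_aeval' {F : Type*} [CommSemiring F] {σ τ : Type*} (y : τ → F)
    (p : σ → MvPolynomial τ F) (q : MvPolynomial σ F) :
    eval y (aeval p q) = eval (fun i => eval y (p i)) q := by
  induction q using MvPolynomial.induction_on with
  | C a => simp
  | add f g hf hg => rw [map_add, map_add, map_add, hf, hg]
  | mul_X f i hf => rw [map_mul, map_mul, map_mul, hf, aeval_X, eval_X]

/-- Counting criterion: if `dim A^d_hom(f) ≥ dim Pol^{rd}_hom(F^s) + 1` for some `d ≥ 1`, then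
`f` is `(s,r)`-weakly elusive. -/
theorem stmt3 {F : Type*} [Field F] {n m s r d : ℕ}
    (hm : n + 1 ≤ m) (hn : 1 ≤ n)
    (f : (Fin n → F) → Fin m → F) (hf : ∃ e, IsPolyMapDeg F n e f)
    (hd : 1 ≤ d)
    (hdim : Module.finrank F (homogeneousSubmodule (Fin s) F (r * d)) + 1 ≤
      Module.finrank F (Ahom f d)) :
    WeaklyElusive f s r := by
  rintro g ⟨p, hp, hgp⟩ hsub
  haveI := homSubFinDim F m d
  haveI := homSubFinDim F s (r * d)
  set V := homogeneousSubmodule (Fin m) F d with hV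
  set W := vanishingOn (Set.range f) d with hW
  let Φ : V →ₗ[F] homogeneousSubmodule (Fin s) F (r * d) :=
  { toFun := fun q => ⟨aeval p (q : MvPolynomial (Fin m) F), q.2.aeval p hp⟩
    map_add' := fun a b => Subtype.ext (by simp)
    map_smul' := fun c a => Subtype.ext (by simp) }
  have hker : LinearMap.ker Φ ≤ W := by
    intro q hq x hx
    obtain ⟨y, hy⟩ := hsub hx
    have h0 : aeval p (q : MvPolynomial (Fin m) F) = 0 :=
      congrArg Subtype.val (LinearMap.mem_ker.mp hq)
    have hx' : x = fun i => eval y (p i) := by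
      funext i; rw [← hy, hgp]
    rw [hx', ← eval_aeval', h0, map_zero]
  have h1 : Module.finrank F (Ahom f d) + Module.finrank F W = Module.finrank F V :=
    Submodule.finrank_quotient_add_finrank W
  have h2 : Module.finrank F (LinearMap.range Φ) + Module.finrank F (LinearMap.ker Φ) =
      Module.finrank F V := LinearMap.finrank_range_add_finrank_ker Φ
  have h3 : Module.finrank F (LinearMap.ker Φ) ≤ Module.finrank F W :=
    Submodule.finrank_mono hker
  have h4 : Module.finrank F (LinearMap.range Φ) ≤
      Module.finrank F (homogeneousSubmodule (Fin s) F (r * d)) :=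
    Submodule.finrank_le _
  omega
end

section
/- Let F be a field and f : F^n → F^m a polynomial mapping. If for some d, s, r, n, m ≥ 1 one has dim A^d_hom(f) ≥ binomial(rd + s - 1, rd) + 1 (where binomial(rd+s-1, rd) = dim Pol^{rd}_hom(F^s)), then f is (s, r)-weakly elusive. -/
open MvPolynomial

noncomputable def homEquiv (F : Type*) [Field F] (s N : ℕ) :
    homogeneousSubmodule (Fin s) F N ≃ₗ[F] ({d : Fin s →₀ ℕ // d.degree = N} →₀ F) :=
  (LinearEquiv.ofEq _ _ (homogeneousSubmodule_eq_finsupp_supported (Fin s) F N)).trans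
    (AddMonoidAlgebra.supportedEquivFinsupp _)

noncomputable instance (s N : ℕ) : Fintype {d : Fin s →₀ ℕ // d.degree = N} :=
  Fintype.ofEquiv (Sym (Fin s) N)
    ((Sym.equivNatSum (Fin s) N).trans (Equiv.subtypeEquivRight (fun P => by
      constructor <;> intro h <;> exact h)))

noncomputable instance (F : Type*) [Field F] (s N : ℕ) :
    FiniteDimensional F (homogeneousSubmodule (Fin s) F N) :=
  Module.Finite.equiv (homEquiv F s N).symm

lemma finrank_homSub (F : Type*) [Field F] (s N : ℕ) :
    Module.finrank F (homogeneousSubmodule (Fin s) F N) = (s + N - 1).choose N := by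
  rw [(homEquiv F s N).finrank_eq, Module.finrank_finsupp_self,
    ← Fintype.card_congr ((Sym.equivNatSum (Fin s) N).trans
      (Equiv.subtypeEquivRight (fun P => by
        constructor <;> intro h <;> exact h))),
    Sym.card_sym_eq_choose, Fintype.card_fin]

set_option maxHeartbeats 1000000
set_option synthInstance.maxHeartbeats 200000

/-- Counting criterion with the explicit binomial coefficient
`dim Pol^{rd}_hom(F^s) = C(rd + s - 1, rd)`: if `dim A^d_hom(f) ≥ C(rd+s-1, rd) + 1`
then `f` is `(s,r)`-weakly elusive. -/
theorem stmt4 {F : Type*} [Field F] {n m s r d : ℕ}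
    (hd : 1 ≤ d) (hs : 1 ≤ s) (hr : 1 ≤ r) (hn : 1 ≤ n) (hm : 1 ≤ m)
    (f : (Fin n → F) → Fin m → F) (hf : ∃ e, IsPolyMapDeg F n e f)
    (hdim : Nat.choose (r * d + s - 1) (r * d) + 1 ≤ Module.finrank F (Ahom f d)) :
    WeaklyElusive f s r := by
  rintro g ⟨p, hp, hgp⟩ hsub
  set V := homogeneousSubmodule (Fin m) F d
  set W := vanishingOn (Set.range f) d
  -- the substitution map
  have hmem : ∀ q : V, (aeval p (q : MvPolynomial (Fin m) F)) ∈
      homogeneousSubmodule (Fin s) F (r * d) := by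
    intro q
    exact ((mem_homogeneousSubmodule _ _).1 q.2).aeval p hp
  let L : V →ₗ[F] MvPolynomial (Fin s) F :=
    (aeval p : MvPolynomial (Fin m) F →ₐ[F] MvPolynomial (Fin s) F).toLinearMap.comp V.subtype
  let Φ : V →ₗ[F] homogeneousSubmodule (Fin s) F (r * d) :=
    L.codRestrict _ hmem
  have hker : LinearMap.ker Φ ≤ W := by
    intro q hq
    have hq0 : aeval p (q : MvPolynomial (Fin m) F) = 0 := by
      have := congrArg (Subtype.val) (LinearMap.mem_ker.1 hq)
      simpa [Φ, L] using this
    rintro x ⟨z, rfl⟩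
    obtain ⟨y, hy⟩ := hsub ⟨z, rfl⟩
    have hx : f z = fun i => eval y (p i) := by
      rw [← hy]; funext i; exact hgp y i
    have : eval (f z) (q : MvPolynomial (Fin m) F)
        = eval y (aeval p (q : MvPolynomial (Fin m) F)) := by
      have h : ∀ (τ : Type) (x : τ → F) (φ : MvPolynomial τ F), eval x φ = aeval x φ := by
        intro τ x φ; rw [aeval_def, Algebra.algebraMap_self]; rfl
      rw [hx, h _ y, aeval_eq_bind₁ p, aeval_bind₁]
      simp only [← h]
    rw [this, hq0, map_zero]
  -- dimension count
  have h1 : Module.finrank F (Ahom f d) ≤ Module.finrank F (V ⧸ LinearMap.ker Φ) := by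
    have surj : Function.Surjective
        (Submodule.mapQ (LinearMap.ker Φ) W LinearMap.id (by simpa using hker)) := by
      intro x
      obtain ⟨v, rfl⟩ := Submodule.Quotient.mk_surjective W x
      exact ⟨Submodule.Quotient.mk v, rfl⟩
    calc Module.finrank F (Ahom f d)
        = Module.finrank F (LinearMap.range (Submodule.mapQ (LinearMap.ker Φ) W LinearMap.id
            (by simpa using hker))) := by
          rw [LinearMap.range_eq_top.2 surj, finrank_top]
      _ ≤ Module.finrank F (V ⧸ LinearMap.ker Φ) := LinearMap.finrank_range_le _
  have h2 : Module.finrank F (V ⧸ LinearMap.ker Φ)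
      = Module.finrank F (LinearMap.range Φ) := Φ.quotKerEquivRange.finrank_eq
  have h3 : Module.finrank F (LinearMap.range Φ)
      ≤ Module.finrank F (homogeneousSubmodule (Fin s) F (r * d)) :=
    Submodule.finrank_le _
  rw [finrank_homSub] at h3
  have : s + r * d - 1 = r * d + s - 1 := by omega
  rw [this] at h3
  omega
end

section
/- The Veronese mapping ν_k : C^n → C^N, N = binomial(n-1+k, k), sending (x_1,...,x_n) to the tuple of all degree-k monomials in x_1,...,x_n, is (s,r)-weakly elusive whenever there exists d ≥ 1 with binomial(dk + n - 1, dk) ≥ binomial(rd + s - 1, rd) + 1. -/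
open MvPolynomial

/-- The index type of degree-`k` monomials in `n` variables
(so that `#(monomialIdx n k) = C(n-1+k, k)`). -/
def monomialIdx (n k : ℕ) : Type :=
  {d : Fin n →₀ ℕ // (d.sum fun _ e => e) = k}

/-- The Veronese mapping of degree `k`, sending `x` to the tuple of all degree-`k`
monomials in `x₁, …, xₙ`. -/
noncomputable def veronese (n k : ℕ) : (Fin n → ℂ) → monomialIdx n k → ℂ :=
  fun x d => ∏ i, x i ^ (d.1 i)

section Aux

lemma multiset_extract {α : Type*} (s : Multiset α) (k : ℕ) (h : k ≤ Multiset.card s) :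
    ∃ u ≤ s, Multiset.card u = k := by
  refine ⟨(s.toList.take k : Multiset α), ?_, ?_⟩
  · conv_rhs => rw [← s.coe_toList]
    exact Multiset.coe_le.mpr (List.take_sublist k s.toList).subperm
  · simp only [Multiset.coe_card, List.length_take, Multiset.length_toList]
    omega

lemma multiset_partition {α : Type*} (k : ℕ) :
    ∀ (D : ℕ) (s : Multiset α), Multiset.card s = D * k →
      ∃ u : Fin D → Multiset α, (∀ t, Multiset.card (u t) = k) ∧ ∑ t, u t = s := by
  intro D
  induction D with
  | zero =>
    intro s hs
    refine ⟨fun t => t.elim0, fun t => t.elim0, ?_⟩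
    simp only [Nat.zero_mul] at hs
    simp [Multiset.card_eq_zero.mp hs]
  | succ D ih =>
    classical
    intro s hs
    obtain ⟨u0, hle, hcard⟩ := multiset_extract s k (by rw [hs]; nlinarith)
    have hc2 : Multiset.card (s - u0) = D * k := by
      rw [Multiset.card_sub hle, hcard, hs]
      ring_nf
      omega
    obtain ⟨u, hu, hsum⟩ := ih (s - u0) hc2
    refine ⟨Fin.cons u0 u, ?_, ?_⟩
    · intro t
      refine Fin.cases ?_ ?_ t <;> simp [hcard, hu]
    · rw [Fin.sum_cons, hsum]
      rw [add_comm]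
      exact tsub_add_cancel_of_le hle

lemma finsupp_split (n k D : ℕ) (μ : Fin n →₀ ℕ) (hμ : (μ.sum fun _ e => e) = D * k) :
    ∃ c : Fin D → (Fin n →₀ ℕ), (∀ t, ((c t).sum fun _ e => e) = k) ∧ ∑ t, c t = μ := by
  classical
  obtain ⟨u, hu, hsum⟩ := multiset_partition k D (Finsupp.toMultiset μ)
    (by rw [Finsupp.card_toMultiset]; exact hμ)
  refine ⟨fun t => Multiset.toFinsupp (u t), fun t => ?_, ?_⟩
  · have h1 := Multiset.toFinsupp_sum_eq (u t)
    exact h1.trans (hu t)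
  · have h2 : (∑ t, Multiset.toFinsupp (u t)) = Multiset.toFinsupp (∑ t, u t) :=
      (map_sum (Multiset.toFinsupp (α := Fin n)).toAddMonoidHom u Finset.univ).symm
    rw [h2, hsum, Finsupp.toMultiset_toFinsupp]

noncomputable def monomialIdxEquivSym (t m : ℕ) : monomialIdx t m ≃ Sym (Fin t) m := by
  classical
  exact Equiv.subtypeEquiv (Multiset.toFinsupp (α := Fin t)).toEquiv.symm
    (fun d => by
      show (d.sum fun _ e => e) = m ↔ Multiset.card (Finsupp.toMultiset d) = m
      rw [Finsupp.card_toMultiset]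
      rfl)

noncomputable instance (t m : ℕ) : Fintype (monomialIdx t m) :=
  Fintype.ofEquiv (Sym (Fin t) m) (monomialIdxEquivSym t m).symm

lemma card_monomialIdx (t m : ℕ) :
    Fintype.card (monomialIdx t m) = (m + t - 1).choose m := by
  rw [Fintype.card_congr (monomialIdxEquivSym t m), Sym.card_sym_eq_choose,
    Fintype.card_fin, Nat.add_comm]

noncomputable def evalLinear (n : ℕ) : MvPolynomial (Fin n) ℂ →ₗ[ℂ] ((Fin n → ℂ) → ℂ) where
  toFun p := fun x => eval x p
  map_add' p q := by funext x; simp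
  map_smul' c p := by funext x; simp [smul_eval]

lemma evalLinear_injective (n : ℕ) : Function.Injective (evalLinear n) := by
  intro p q hpq
  exact MvPolynomial.funext (fun x => congrFun hpq x)

end Aux

/-- The Veronese mapping `ν_k : ℂⁿ → ℂ^{C(n-1+k,k)}` is `(s,r)`-weakly elusive whenever
there is `d ≥ 1` with `C(dk + n - 1, dk) ≥ C(rd + s - 1, rd) + 1`. -/
theorem stmt5 (n k s r : ℕ) (hn : 1 ≤ n) (hk : 1 ≤ k)
    (h : ∃ d, 1 ≤ d ∧
      Nat.choose (r * d + s - 1) (r * d) + 1 ≤ Nat.choose (d * k + n - 1) (d * k)) :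
    WeaklyElusive (veronese n k) s r := by
  classical
  obtain ⟨d, hd1, hcount⟩ := h
  intro g hg hsub
  obtain ⟨p, hphom, hpev⟩ := hg
  have hy : ∀ x : Fin n → ℂ, ∃ z : Fin s → ℂ, g z = veronese n k x :=
    fun x => hsub (Set.mem_range_self x)
  choose y hy using hy
  set F : monomialIdx s (r * d) → ((Fin n → ℂ) → ℂ) :=
    fun ν => fun x => ∏ j, (y x j) ^ (ν.1 j) with hF
  set G : monomialIdx n (d * k) → ((Fin n → ℂ) → ℂ) :=
    fun μ => fun x => ∏ i, x i ^ (μ.1 i) with hG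
  -- linear independence of G
  have hli : LinearIndependent ℂ G := by
    have h1 : LinearIndependent ℂ
        (fun μ : monomialIdx n (d * k) => (monomial μ.1 (1 : ℂ) : MvPolynomial (Fin n) ℂ)) := by
      have hb := (basisMonomials (Fin n) ℂ).linearIndependent
      have hcomp := hb.comp (fun μ : monomialIdx n (d * k) => μ.1)
        (fun a b hab => Subtype.ext hab)
      rw [coe_basisMonomials] at hcomp
      exact hcomp
    have h2 := h1.map' (evalLinear n) (LinearMap.ker_eq_bot.mpr (evalLinear_injective n))
    have h3 : ((evalLinear n) ∘ fun μ : monomialIdx n (d * k) =>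
        (monomial μ.1 (1 : ℂ) : MvPolynomial (Fin n) ℂ)) = G := by
      funext μ
      funext x
      simp [evalLinear, eval_monomial, Finsupp.prod_pow, hG]
    rwa [h3] at h2
  -- each G μ is in the span of the range of F
  have hspan : ∀ μ, G μ ∈ Submodule.span ℂ (Set.range F) := by
    intro μ
    obtain ⟨c, hck, hcsum⟩ := finsupp_split n k d μ.1 (μ.2.trans rfl)
    set c' : Fin d → monomialIdx n k := fun t => ⟨c t, hck t⟩ with hc'
    set q : MvPolynomial (Fin s) ℂ := ∏ t : Fin d, p (c' t) with hq
    have hqhom : q.IsHomogeneous (r * d) := by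
      have := MvPolynomial.IsHomogeneous.prod Finset.univ (fun t => p (c' t))
        (fun _ => r) (fun t _ => hphom (c' t))
      simpa [Finset.sum_const, mul_comm] using this
    have hGμ : G μ = fun x => eval (y x) q := by
      funext x
      have hstep1 : G μ x = ∏ t : Fin d, (∏ i, x i ^ (c t i)) := by
        have happ : ∀ i, μ.1 i = ∑ t : Fin d, c t i := by
          intro i
          rw [← hcsum]
          simp [Finsupp.finset_sum_apply]
        calc G μ x = ∏ i, x i ^ (∑ t : Fin d, c t i) := by
              simp only [hG]
              exact Finset.prod_congr rfl fun i _ => by rw [happ i]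
          _ = ∏ i, ∏ t : Fin d, x i ^ (c t i) := by
              refine Finset.prod_congr rfl fun i _ => ?_
              rw [← Finset.prod_pow_eq_pow_sum]
          _ = ∏ t : Fin d, ∏ i, x i ^ (c t i) := Finset.prod_comm
      rw [hstep1, hq]
      rw [map_prod]
      refine Finset.prod_congr rfl fun t _ => ?_
      have h4 : (∏ i, x i ^ (c t i)) = veronese n k x (c' t) := rfl
      rw [h4, ← hy x, hpev]
    rw [hGμ]
    have hsum2 : (fun x => eval (y x) q) =
        ∑ ν ∈ q.support, (coeff ν q) • (fun x => ∏ j, (y x j) ^ (ν j)) := by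
      funext x
      rw [eval_eq']
      simp [Finset.sum_apply]
    rw [hsum2]
    refine Submodule.sum_mem _ fun ν hν => Submodule.smul_mem _ _ ?_
    refine Submodule.subset_span ?_
    have hdeg : (ν.sum fun _ e => e) = r * d := by
      have h6 := hqhom (mem_support_iff.mp hν)
      rw [Finsupp.weight_apply] at h6
      simpa [Finsupp.degree, Finsupp.sum] using h6
    exact ⟨⟨ν, hdeg⟩, rfl⟩
  -- cardinality contradiction
  have hcard := linearIndependent_le_span' G hli (Set.range F)
    (Set.range_subset_iff.mpr hspan)
  rw [Cardinal.mk_fintype] at hcard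
  have hcard2 : Fintype.card (monomialIdx n (d * k)) ≤ Fintype.card (monomialIdx s (r * d)) := by
    have h5 : Fintype.card (Set.range F) ≤ Fintype.card (monomialIdx s (r * d)) :=
      Fintype.card_range_le F
    exact_mod_cast hcard.trans (Nat.cast_le.mpr h5)
  rw [card_monomialIdx, card_monomialIdx] at hcard2
  omega
end

section
/- Let F be a field with char(F) = 0 (or r ≤ char(F) - 1), and suppose m·binomial(s+r-1, r) + k·s ≤ mk - 1. Then the image of the evaluation map Ev^r_{s,m,k} : (Pol^r_hom(F^s)^*)^m × (F^s)^k → F^{mk} is contained in a proper Zariski-closed subset of F^{mk}; in particular, when F is infinite, there exists a k-tuple of points in F^m that is (s,r)-weakly elusive. -/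
open MvPolynomial

/-- A `k`-tuple `b` of points of `F^m` is `(s,r)`-weakly elusive if no homogeneous polynomial
mapping `F^s → F^m` of degree `r` contains all the points `b j` in its image. -/
def TupleWeaklyElusive {F : Type*} [CommSemiring F] {m k : ℕ}
    (b : Fin k → Fin m → F) (s r : ℕ) : Prop :=
  ∀ g : (Fin s → F) → Fin m → F, IsHomPolyMap F s r g → ¬ ∀ j, b j ∈ Set.range g

/-- The evaluation map `Ev^r_{s,m,k}`, sending an `m`-tuple of polynomials on `F^s` together
with `k` points of `F^s` to the `m × k` matrix of evaluations. -/
noncomputable def Ev (F : Type*) [CommSemiring F] (s m k : ℕ) :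
    (Fin m → MvPolynomial (Fin s) F) × (Fin k → Fin s → F) → (Fin m → Fin k → F) :=
  fun pa i j => eval (pa.2 j) (pa.1 i)

set_option maxHeartbeats 1000000


section Aux

variable {F : Type*} [Field F]

lemma aux_totalDegree_aeval_le {ι V : Type*} (P : ι → MvPolynomial V F) (e : ℕ)
    (hP : ∀ i, (P i).totalDegree ≤ e) (q : MvPolynomial ι F) :
    (MvPolynomial.aeval P q).totalDegree ≤ q.totalDegree * e := by
  rw [MvPolynomial.aeval_def, MvPolynomial.eval₂_eq]
  refine (MvPolynomial.totalDegree_finset_sum _ _).trans ?_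
  refine Finset.sup_le fun d hd => ?_
  refine (MvPolynomial.totalDegree_mul _ _).trans ?_
  have h1 : (algebraMap F (MvPolynomial V F) (MvPolynomial.coeff d q)).totalDegree = 0 := by
    rw [MvPolynomial.algebraMap_eq, MvPolynomial.totalDegree_C]
  rw [h1, zero_add]
  refine (MvPolynomial.totalDegree_finset_prod _ _).trans ?_
  calc ∑ i ∈ d.support, (P i ^ d i).totalDegree
      ≤ ∑ i ∈ d.support, d i * e := by
        refine Finset.sum_le_sum fun i _ => ?_
        exact (MvPolynomial.totalDegree_pow _ _).trans (Nat.mul_le_mul_left _ (hP i))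
    _ = (∑ i ∈ d.support, d i) * e := by rw [Finset.sum_mul]
    _ ≤ q.totalDegree * e := Nat.mul_le_mul_right _ (MvPolynomial.le_totalDegree hd)

lemma aux_exists_inj (V : Type*) (M : ℕ) :
    ∃ f : {n : V →₀ ℕ | (n.sum fun _ e => e) ≤ M} → (V → Fin (M+1)),
      Function.Injective f := by
  refine ⟨fun d => fun v : V => ⟨d.1 v, ?_⟩, ?_⟩
  · have h1 : d.1 v ≤ d.1.sum fun _ e => e := by
      by_cases h : d.1 v = 0
      · omega
      · exact Finset.single_le_sum (f := fun i => d.1 i) (fun _ _ => Nat.zero_le _)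
          (Finsupp.mem_support_iff.mpr h)
    have h2 := d.2
    simp only [Set.mem_setOf_eq] at h2
    omega
  · intro d₁ d₂ hd
    refine Subtype.ext (Finsupp.ext fun v => ?_)
    exact congrArg Fin.val (congrFun hd v)

lemma aux_finite_monos (V : Type*) [Finite V] (M : ℕ) :
    Finite {n : V →₀ ℕ | (n.sum fun _ e => e) ≤ M} := by
  obtain ⟨f, hf⟩ := aux_exists_inj V M
  exact Finite.of_injective f hf

lemma aux_card_monos_le (V : Type*) [Fintype V] (M : ℕ) :
    Nat.card {n : V →₀ ℕ | (n.sum fun _ e => e) ≤ M} ≤ (M+1) ^ Fintype.card V := by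
  classical
  obtain ⟨f, hf⟩ := aux_exists_inj V M
  calc Nat.card {n : V →₀ ℕ | (n.sum fun _ e => e) ≤ M}
      ≤ Nat.card (V → Fin (M+1)) := Nat.card_le_card_of_injective f hf
    _ = (M+1) ^ Fintype.card V := by
        rw [Nat.card_eq_fintype_card, Fintype.card_fun, Fintype.card_fin]

lemma aux_le_card_monos (ι : Type*) [Fintype ι] (T : ℕ) :
    (T+1) ^ Fintype.card ι
      ≤ Nat.card {n : ι →₀ ℕ | (n.sum fun _ e => e) ≤ Fintype.card ι * T} := by
  classical
  have : Finite {n : ι →₀ ℕ | (n.sum fun _ e => e) ≤ Fintype.card ι * T} :=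
    aux_finite_monos ι _
  have hinj : Function.Injective
      (fun (g : ι → Fin (T+1)) =>
        (⟨Finsupp.equivFunOnFinite.symm (fun i => (g i : ℕ)), by
          simp only [Set.mem_setOf_eq]
          rw [Finsupp.sum_fintype _ _ (fun _ => rfl)]
          calc ∑ i : ι, (Finsupp.equivFunOnFinite.symm (fun i => (g i : ℕ))) i
              = ∑ i : ι, (g i : ℕ) := by simp [Finsupp.equivFunOnFinite]
            _ ≤ ∑ _i : ι, T := Finset.sum_le_sum fun i _ => Fin.is_le _
            _ = Fintype.card ι * T := by simp [Finset.sum_const, mul_comm]⟩ :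
          {n : ι →₀ ℕ | (n.sum fun _ e => e) ≤ Fintype.card ι * T})) := by
    intro g₁ g₂ hg
    have := congrArg Subtype.val hg
    have h2 := Finsupp.equivFunOnFinite.symm.injective this
    funext i
    exact Fin.ext (congrFun h2 i)
  calc (T+1) ^ Fintype.card ι = Nat.card (ι → Fin (T+1)) := by
        rw [Nat.card_eq_fintype_card, Fintype.card_fun, Fintype.card_fin]
    _ ≤ _ := Nat.card_le_card_of_injective _ hinj

lemma aux_finrank_rtd (σ : Type*) [Fintype σ] (N : ℕ) :
    Module.finrank F (MvPolynomial.restrictTotalDegree σ F N)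
      = Nat.card {n : σ →₀ ℕ | (n.sum fun _ e => e) ≤ N} := by
  have : Finite {n : σ →₀ ℕ | (n.sum fun _ e => e) ≤ N} := aux_finite_monos σ N
  have : Fintype {n : σ →₀ ℕ | (n.sum fun _ e => e) ≤ N} := Fintype.ofFinite _
  rw [show MvPolynomial.restrictTotalDegree σ F N
      = MvPolynomial.restrictSupport F {n : σ →₀ ℕ | (n.sum fun _ e => e) ≤ N} from rfl,
    Module.finrank_eq_card_basis
    (MvPolynomial.basisRestrictSupport F {n : σ →₀ ℕ | (n.sum fun _ e => e) ≤ N}),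
    Nat.card_eq_fintype_card]

lemma aux_numeric {D n e T : ℕ} (hDn : D < n) (he : 1 ≤ e)
    (hT : T + 1 = 2 * (2*n*e)^D) :
    (n*T*e + 1)^D < (T+1)^n := by
  have hn : 1 ≤ n := by omega
  set B := (2*n*e)^D with hB
  have hB1 : 1 ≤ B := Nat.one_le_pow _ _ (by positivity)
  have hT1 : 1 ≤ T := by omega
  have hnte : 1 ≤ n*T*e := by
    have := Nat.mul_le_mul (Nat.mul_le_mul hn hT1) he
    simpa using this
  have hpos : 0 < B * (T+1)^D := by positivity
  calc (n*T*e + 1)^D ≤ (2*(n*T*e))^D := Nat.pow_le_pow_left (by omega) _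
    _ = (2*n*e)^D * T^D := by rw [← mul_pow]; ring_nf
    _ ≤ B * (T+1)^D := Nat.mul_le_mul_left _ (Nat.pow_le_pow_left (by omega) _)
    _ < 2 * B * (T+1)^D := by
        have : B * (T+1)^D + 0 < B * (T+1)^D + B * (T+1)^D := by omega
        calc B * (T+1)^D < B * (T+1)^D + B * (T+1)^D := by omega
          _ = 2 * B * (T+1)^D := by ring
    _ = (T+1)^(D+1) := by rw [pow_succ, hT]; ring
    _ ≤ (T+1)^n := Nat.pow_le_pow_right (by omega) (by omega)

lemma aux_exists_annihilator {ι V : Type*} [Fintype ι] [Fintype V]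
    (hcard : Fintype.card V < Fintype.card ι) (P : ι → MvPolynomial V F) :
    ∃ q : MvPolynomial ι F, q ≠ 0 ∧ MvPolynomial.aeval P q = 0 := by
  classical
  set n := Fintype.card ι with hn
  set D := Fintype.card V with hD
  set e := 1 + Finset.univ.sup fun i => (P i).totalDegree with he
  have hPe : ∀ i, (P i).totalDegree ≤ e := fun i => by
    have h : (P i).totalDegree ≤ Finset.univ.sup fun i => (P i).totalDegree :=
      Finset.le_sup (f := fun i => (P i).totalDegree) (Finset.mem_univ i)
    omega
  have he1 : 1 ≤ e := by omega
  have hn1 : 1 ≤ n := by omega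
  set T := 2*(2*n*e)^D - 1 with hTdef
  have hT : T + 1 = 2*(2*n*e)^D := by
    have := Nat.one_le_pow D (2*n*e) (by positivity)
    omega
  set t := n*T with ht
  have hmaps : ∀ x ∈ MvPolynomial.restrictTotalDegree ι F t,
      (MvPolynomial.aeval P).toLinearMap x ∈ MvPolynomial.restrictTotalDegree V F (t*e) := by
    intro x hx
    rw [MvPolynomial.mem_restrictTotalDegree] at hx ⊢
    exact le_trans (aux_totalDegree_aeval_le P e hPe x) (Nat.mul_le_mul_right _ hx)
  set L := ((MvPolynomial.aeval P).toLinearMap).restrict hmaps with hL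
  have hni : ¬ Function.Injective L := by
    intro hinj
    have hfr := LinearMap.finrank_le_finrank_of_injective hinj
    rw [aux_finrank_rtd, aux_finrank_rtd] at hfr
    have h1 := aux_le_card_monos ι T
    have h2 := aux_card_monos_le V (t*e)
    have h3 := aux_numeric hcard he1 hT
    rw [← hn, ← ht] at h1
    rw [← hD] at h2
    rw [← ht] at h3
    omega
  rw [Function.not_injective_iff] at hni
  obtain ⟨a, b, hab, hne⟩ := hni
  refine ⟨(a : MvPolynomial ι F) - b, sub_ne_zero.mpr (fun hh => hne (Subtype.ext hh)), ?_⟩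
  have hval : MvPolynomial.aeval P (a : MvPolynomial ι F)
      = MvPolynomial.aeval P (b : MvPolynomial ι F) := congrArg Subtype.val hab
  rw [map_sub, hval, sub_self]

end Aux

/-- If `char F = 0` and `m·C(s+r-1,r) + k·s ≤ mk - 1`, then the image of the evaluation map
`Ev^r_{s,m,k}` lies in a proper Zariski-closed subset of `F^{mk}` (the zero set of a nonzero
polynomial); in particular there is an `(s,r)`-weakly elusive `k`-tuple of points of `F^m`. -/
theorem stmt10 {F : Type*} [Field F] [CharZero F] {s m k r : ℕ}
    (hmk : 1 ≤ m * k)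
    (h : m * Nat.choose (s + r - 1) r + k * s ≤ m * k - 1) :
    (∃ q : MvPolynomial (Fin m × Fin k) F, q ≠ 0 ∧
      ∀ pa : (Fin m → MvPolynomial (Fin s) F) × (Fin k → Fin s → F),
        (∀ i, (pa.1 i).IsHomogeneous r) →
          eval (fun ij => Ev F s m k pa ij.1 ij.2) q = 0) ∧
    ∃ b : Fin k → Fin m → F, TupleWeaklyElusive b s r := by
  classical
  have hcard : Fintype.card ((Fin m × Sym (Fin s) r) ⊕ (Fin k × Fin s))
      < Fintype.card (Fin m × Fin k) := by
    have hsym : Fintype.card (Sym (Fin s) r) = Nat.choose (s + r - 1) r := by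
      rw [Sym.card_sym_eq_choose, Fintype.card_fin]
    simp only [Fintype.card_sum, Fintype.card_prod, Fintype.card_fin, hsym]
    omega
  set P : Fin m × Fin k → MvPolynomial ((Fin m × Sym (Fin s) r) ⊕ (Fin k × Fin s)) F :=
    fun ij =>
      ∑ σ : Sym (Fin s) r, X (Sum.inl (ij.1, σ)) *
        ∏ t : Fin s, X (Sum.inr (ij.2, t)) ^ Multiset.count t (σ : Multiset (Fin s)) with hP
  obtain ⟨q, hq0, hqann⟩ := aux_exists_annihilator (F := F) hcard P
  have haev : ∀ {κ : Type} (w : κ → F) (p : MvPolynomial κ F),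
      (MvPolynomial.aeval w) p = eval w p := by
    intro κ w p
    rw [← MvPolynomial.coe_aeval_eq_eval]
    rfl
  have key : ∀ pa : (Fin m → MvPolynomial (Fin s) F) × (Fin k → Fin s → F),
      (∀ i, (pa.1 i).IsHomogeneous r) →
        eval (fun ij : Fin m × Fin k => Ev F s m k pa ij.1 ij.2) q = 0 := by
    intro pa hhom
    set v : ((Fin m × Sym (Fin s) r) ⊕ (Fin k × Fin s)) → F := Sum.elim
      (fun iσ => MvPolynomial.coeff (Multiset.toFinsupp (iσ.2 : Multiset (Fin s))) (pa.1 iσ.1))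
      (fun jt => pa.2 jt.1 jt.2) with hv
    set g : Sym (Fin s) r → (Fin s →₀ ℕ) :=
      fun σ => Multiset.toFinsupp (σ : Multiset (Fin s)) with hg
    have hginj : Function.Injective g := by
      intro σ₁ σ₂ hσ
      exact Sym.coe_injective (Multiset.toFinsupp.injective hσ)
    have hPeval : ∀ ij : Fin m × Fin k, eval v (P ij) = Ev F s m k pa ij.1 ij.2 := by
      rintro ⟨i, j⟩
      have hsub : (pa.1 i).support ⊆ Finset.univ.image g := by
        intro d hd
        have hdeg : d.degree = r := by
          by_contra hne
          exact (MvPolynomial.mem_support_iff.mp hd) ((hhom i).coeff_eq_zero hne)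
        have hcardd : Multiset.card (Finsupp.toMultiset d) = r := by
          rw [Finsupp.card_toMultiset]
          rw [← hdeg]
          rfl
        refine Finset.mem_image.mpr ⟨⟨Finsupp.toMultiset d, hcardd⟩, Finset.mem_univ _, ?_⟩
        simp [hg, Finsupp.toMultiset_toFinsupp]
      calc eval v (P (i, j))
          = ∑ σ : Sym (Fin s) r, MvPolynomial.coeff (g σ) (pa.1 i) *
              ∏ t : Fin s, pa.2 j t ^ (g σ) t := by
            simp [hP, hv, hg, Multiset.toFinsupp_apply]
        _ = ∑ d ∈ Finset.univ.image g, MvPolynomial.coeff d (pa.1 i) *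
              ∏ t : Fin s, pa.2 j t ^ d t := by
            rw [Finset.sum_image (fun a _ b _ hab => hginj hab)]
        _ = ∑ d ∈ (pa.1 i).support, MvPolynomial.coeff d (pa.1 i) *
              ∏ t : Fin s, pa.2 j t ^ d t :=
            (Finset.sum_subset hsub (fun d _ hd => by
              rw [MvPolynomial.notMem_support_iff.mp hd, zero_mul])).symm
        _ = Ev F s m k pa i j := (MvPolynomial.eval_eq' _ _).symm
    calc eval (fun ij : Fin m × Fin k => Ev F s m k pa ij.1 ij.2) q
        = eval (fun ij => eval v (P ij)) q := by
          rw [show (fun ij : Fin m × Fin k => Ev F s m k pa ij.1 ij.2)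
            = fun ij => eval v (P ij) from funext fun ij => (hPeval ij).symm]
      _ = MvPolynomial.aeval (fun ij => MvPolynomial.aeval v (P ij)) q := by
          simp only [haev]
      _ = MvPolynomial.aeval v (MvPolynomial.aeval P q) :=
          (MvPolynomial.comp_aeval_apply (f := P) (MvPolynomial.aeval v) q).symm
      _ = 0 := by rw [hqann, map_zero]
  refine ⟨⟨q, hq0, key⟩, ?_⟩
  have hx : ∃ x : (Fin m × Fin k) → F, eval x q ≠ 0 := by
    by_contra hcon
    push_neg at hcon
    exact hq0 (MvPolynomial.funext fun x => by rw [hcon x, map_zero])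
  obtain ⟨x, hx⟩ := hx
  refine ⟨fun j i => x (i, j), ?_⟩
  intro g' hg' hall
  obtain ⟨p, hphom, hgp⟩ := hg'
  choose a ha using hall
  have h1 : (fun ij : Fin m × Fin k => Ev F s m k (p, a) ij.1 ij.2) = x := by
    funext ij
    obtain ⟨i, j⟩ := ij
    show eval (a j) (p i) = x (i, j)
    rw [← hgp (a j) i]
    exact congrFun (ha j) i
  exact hx (by rw [← h1]; exact key (p, a) hphom)
end
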